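/- Fix integers N ≥ 1 and N_t ≥ 1 and real numbers x, y with y ≥ 0 and x ≥ (N − 1)·y. Then O₄O₅ − Re(M₄(x)·M₅(y)) ≤ (3π/4)·N·N_t·(N_t−1)²·x − (π/4)·N(N−1)(N_t−1)(2N_t−1)·y. -/

import Mathlib

open Real

noncomputable section

/-- `O₁ = N(N−1)(2N−1)/6`. -/
def O₁ (N : ℕ) : ℝ := (N : ℝ) * ((N : ℝ) - 1) * (2 * (N : ℝ) - 1) / 6
/-- `O₂ = N(N−1)/2`. -/
def O₂ (N : ℕ) : ℝ := (N : ℝ) * ((N : ℝ) - 1) / 2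
/-- `O₃ = (N_t−1)/2`. -/
def O₃ (Nt : ℕ) : ℝ := ((Nt : ℝ) - 1) / 2
/-- `O₄ = (N_t−1)(2N_t−1)/6`. -/
def O₄ (Nt : ℕ) : ℝ := ((Nt : ℝ) - 1) * (2 * (Nt : ℝ) - 1) / 6
/-- `O₅ = N`. -/
def O₅ (N : ℕ) : ℝ := (N : ℝ)
/-- `O₆ = 1`. -/
def O₆ (Nt : ℕ) : ℝ := 1

/-- `M₁(y) = Σ_{n<N} n² e^{−2πiny}`. -/
def M₁ (N : ℕ) (y : ℝ) : ℂ :=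
  ∑ n ∈ Finset.range N, (n : ℂ) ^ 2 * Complex.exp (-(2 * (π : ℂ) * Complex.I * n * y))
/-- `M₂(y) = Σ_{n<N} n e^{−2πiny}`. -/
def M₂ (N : ℕ) (y : ℝ) : ℂ :=
  ∑ n ∈ Finset.range N, (n : ℂ) * Complex.exp (-(2 * (π : ℂ) * Complex.I * n * y))
/-- `M₃(x) = (1/N_t) Σ_{m<N_t} m e^{2πimx}`. -/
def M₃ (Nt : ℕ) (x : ℝ) : ℂ :=
  (Nt : ℂ)⁻¹ * ∑ m ∈ Finset.range Nt, (m : ℂ) * Complex.exp (2 * (π : ℂ) * Complex.I * m * x)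
/-- `M₄(x) = (1/N_t) Σ_{m<N_t} m² e^{2πimx}`. -/
def M₄ (Nt : ℕ) (x : ℝ) : ℂ :=
  (Nt : ℂ)⁻¹ * ∑ m ∈ Finset.range Nt, (m : ℂ) ^ 2 * Complex.exp (2 * (π : ℂ) * Complex.I * m * x)
/-- `M₅(y) = Σ_{n<N} e^{−2πiny}`. -/
def M₅ (N : ℕ) (y : ℝ) : ℂ :=
  ∑ n ∈ Finset.range N, Complex.exp (-(2 * (π : ℂ) * Complex.I * n * y))
/-- `M₆(x) = (1/N_t) Σ_{m<N_t} e^{2πimx}`. -/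
def M₆ (Nt : ℕ) (x : ℝ) : ℂ :=
  (Nt : ℂ)⁻¹ * ∑ m ∈ Finset.range Nt, Complex.exp (2 * (π : ℂ) * Complex.I * m * x)

lemma my_sum_id (n : ℕ) : ∑ i ∈ Finset.range n, (i:ℝ) = n*((n:ℝ)-1)/2 := by
  induction n with
  | zero => simp
  | succ k ih => rw [Finset.sum_range_succ, ih]; push_cast; ring

lemma my_sum_sq (n : ℕ) : ∑ i ∈ Finset.range n, (i:ℝ)^2 = n*((n:ℝ)-1)*(2*(n:ℝ)-1)/6 := by
  induction n with
  | zero => simp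
  | succ k ih => rw [Finset.sum_range_succ, ih]; push_cast; ring

lemma my_sum_cube (n : ℕ) : ∑ i ∈ Finset.range n, (i:ℝ)^3 = ((n:ℝ)*((n:ℝ)-1))^2/4 := by
  induction n with
  | zero => simp
  | succ k ih => rw [Finset.sum_range_succ, ih]; push_cast; ring

lemma my_one_sub_cos (t : ℝ) (ht : 0 ≤ t) : 1 - Real.cos (2*π*t) ≤ 3*π*t := by
  rcases le_or_gt t (1/π) with h | h
  · have hc := Real.one_sub_sq_div_two_le_cos (x := 2*π*t)
    have h1 : t * π ≤ 1 := (le_div_iff₀ Real.pi_pos).mp h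
    nlinarith [mul_nonneg (mul_nonneg Real.pi_pos.le ht) (by linarith : (0:ℝ) ≤ 3 - 2*(t*π))]
  · have hc := Real.neg_one_le_cos (2*π*t)
    have h1 : 1 < π * t := by rw [← div_lt_iff₀' Real.pi_pos]; exact h
    nlinarith


/-- **Equation (51), Appendix D.** For `y ≥ 0` and `x ≥ (N−1)y`,
`O₄O₅ − Re(M₄(x)M₅(y)) ≤ (3π/4)N N_t(N_t−1)²x − (π/4)N(N−1)(N_t−1)(2N_t−1)y`. -/
theorem O4O5_minus_re_M4M5_upper_bound
    (N Nt : ℕ) (hN : 1 ≤ N) (hNt : 1 ≤ Nt) (x y : ℝ)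
    (hy : 0 ≤ y) (hxy : ((N : ℝ) - 1) * y ≤ x) :
    O₄ Nt * O₅ N - (M₄ Nt x * M₅ N y).re
      ≤ (3 * π / 4) * (N : ℝ) * (Nt : ℝ) * ((Nt : ℝ) - 1) ^ 2 * x
        - (π / 4) * (N : ℝ) * ((N : ℝ) - 1) * ((Nt : ℝ) - 1) * (2 * (Nt : ℝ) - 1) * y := by
  have hπ := Real.pi_pos
  have hNt0 : (Nt:ℝ) ≠ 0 := Nat.cast_ne_zero.mpr (by omega)
  have hN1 : (1:ℝ) ≤ (N:ℝ) := by exact_mod_cast hN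
  have hx0 : 0 ≤ x := le_trans (mul_nonneg (by linarith) hy) hxy
  -- Re of the product as a double cosine sum
  have hre : (M₄ Nt x * M₅ N y).re
      = (Nt:ℝ)⁻¹ * ∑ m ∈ Finset.range Nt, ∑ n ∈ Finset.range N,
          (m:ℝ)^2 * Real.cos (2*π*((m:ℝ)*x - (n:ℝ)*y)) := by
    rw [M₄, M₅, mul_assoc, Finset.sum_mul_sum,
        show ((Nt:ℂ)⁻¹ = (((Nt:ℝ)⁻¹ : ℝ) : ℂ)) by push_cast; ring,
        Complex.re_ofReal_mul]
    congr 1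
    rw [Complex.re_sum]
    refine Finset.sum_congr rfl fun m _ => ?_
    rw [Complex.re_sum]
    refine Finset.sum_congr rfl fun n _ => ?_
    rw [mul_assoc, ← Complex.exp_add,
        show (2*(π:ℂ)*Complex.I*m*x + -(2*(π:ℂ)*Complex.I*n*y))
            = ((2*π*((m:ℝ)*x - (n:ℝ)*y) : ℝ) : ℂ) * Complex.I by push_cast; ring,
        show ((m:ℂ)^2 = (((m:ℝ)^2 : ℝ) : ℂ)) by push_cast; ring,
        Complex.re_ofReal_mul, Complex.exp_ofReal_mul_I_re]
  -- O₄O₅ as the same double sum with cos replaced by 1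
  have hO : O₄ Nt * O₅ N
      = (Nt:ℝ)⁻¹ * ∑ m ∈ Finset.range Nt, ∑ n ∈ Finset.range N, (m:ℝ)^2 := by
    simp only [Finset.sum_const, Finset.card_range, nsmul_eq_mul, ← Finset.mul_sum,
      my_sum_sq, O₄, O₅]
    field_simp
  rw [hre, hO, ← mul_sub, ← Finset.sum_sub_distrib]
  simp only [← Finset.sum_sub_distrib]
  have key : ∑ m ∈ Finset.range Nt, ∑ n ∈ Finset.range N,
        ((m:ℝ)^2 - (m:ℝ)^2 * Real.cos (2*π*((m:ℝ)*x - (n:ℝ)*y)))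
      ≤ ∑ m ∈ Finset.range Nt, ∑ n ∈ Finset.range N,
        (m:ℝ)^2 * (3*π*((m:ℝ)*x - (n:ℝ)*y)) := by
    refine Finset.sum_le_sum fun m _ => Finset.sum_le_sum fun n hn => ?_
    rcases Nat.eq_zero_or_pos m with hm | hm
    · simp [hm]
    · have hm1 : (1:ℝ) ≤ (m:ℝ) := by exact_mod_cast hm
      have hnN : (n:ℝ) ≤ (N:ℝ) - 1 := by
        have := Finset.mem_range.mp hn
        have : (n:ℝ) + 1 ≤ (N:ℝ) := by exact_mod_cast this
        linarith
      have ht : 0 ≤ (m:ℝ)*x - (n:ℝ)*y := by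
        nlinarith [mul_nonneg (sub_nonneg.mpr hm1) hx0,
          mul_nonneg (sub_nonneg.mpr hnN) hy]
      have := my_one_sub_cos ((m:ℝ)*x - (n:ℝ)*y) ht
      nlinarith [sq_nonneg (m:ℝ), mul_le_mul_of_nonneg_left this (sq_nonneg (m:ℝ))]
  have hmono := mul_le_mul_of_nonneg_left key (inv_nonneg.mpr (Nat.cast_nonneg Nt))
  refine le_trans hmono (le_of_eq ?_)
  have inner : ∀ m : ℕ, ∑ n ∈ Finset.range N, (m:ℝ)^2 * (3*π*((m:ℝ)*x - (n:ℝ)*y))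
      = (3*π*x*(N:ℝ))*(m:ℝ)^3 - (3*π*y*((N:ℝ)*((N:ℝ)-1)/2))*(m:ℝ)^2 := by
    intro m
    have e : ∀ n : ℕ, (m:ℝ)^2 * (3*π*((m:ℝ)*x - (n:ℝ)*y))
        = (3*π*x)*(m:ℝ)^3 - ((m:ℝ)^2*(3*π*y))*(n:ℝ) := fun n => by ring
    simp only [e, Finset.sum_sub_distrib, Finset.sum_const, Finset.card_range,
      nsmul_eq_mul, ← Finset.mul_sum, my_sum_id]
    ring
  rw [Finset.sum_congr rfl fun m _ => inner m, Finset.sum_sub_distrib,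
    ← Finset.mul_sum, ← Finset.mul_sum, my_sum_cube, my_sum_sq]
  field_simp
  ring


end
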